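/- Let b₀ ∈ ℝ, and suppose the kernels H_{b₀}(·,·) and R_{b₀}(·,·;ξ) are EAD uniformly for ξ in a compact set K (i.e. |H_{b₀}(x,y)| ≤ c₁ e^{−c₂|x−y|} and sup_{ξ∈K} |R_{b₀}(x,y;ξ)| ≤ c₁ e^{−c₂|x−y|}). Define for b ∈ ℝ the operator T̃_b(ξ) by the kernel T̃_b(x,y;ξ) := e^{i δb φ(x,y)} Σ_z (e^{i δb fl(x,z,y)} − 1) H_{b₀}(x,z) R_{b₀}(z,y;ξ) with δb := b − b₀. Then there is a constant c_K > 0 such that for all b ∈ ℝ and all ξ ∈ K, the kernel satisfies |T̃_b(x,y;ξ)| ≤ c_K |δb| e^{−c₂'|x−y|} for some c₂' > 0, and consequently ‖T̃_b(ξ)‖ ≤ C_K |δb|. -/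

import Mathlib

/-- The symmetric-gauge magnetic phase φ(x,y) := (1/2)(y₁x₂ − x₁y₂) on ℝ². -/
noncomputable def phiE (x y : EuclideanSpace ℝ (Fin 2)) : ℝ :=
  (1 / 2) * (y 0 * x 1 - x 0 * y 1)

/-- The magnetic flux fl(x,z,y) := φ(x,z) + φ(z,y) + φ(y,x). -/
noncomputable def flE (x z y : EuclideanSpace ℝ (Fin 2)) : ℝ :=
  phiE x z + phiE z y + phiE y x

lemma aux_abs_exp (z : ℂ) (hz : z.re = 0) : ‖Complex.exp z‖ = 1 := by
  rw [Complex.norm_exp, hz, Real.exp_zero]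

lemma aux_exp_sub_one (z : ℂ) (hz : z.re = 0) :
    ‖Complex.exp z - 1‖ ≤ 2 * ‖z‖ := by
  rcases le_or_gt (‖z‖) 1 with h | h
  · exact Complex.norm_exp_sub_one_le h
  · calc ‖Complex.exp z - 1‖ ≤ ‖Complex.exp z‖ + ‖(1 : ℂ)‖ := by
          exact norm_sub_le (Complex.exp z) 1
    _ = 2 := by rw [aux_abs_exp z hz, norm_one]; norm_num
    _ ≤ 2 * ‖z‖ := by nlinarith

lemma aux_dist (x y : EuclideanSpace ℝ (Fin 2)) :
    dist x y = Real.sqrt ((x 0 - y 0) ^ 2 + (x 1 - y 1) ^ 2) := by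
  rw [EuclideanSpace.dist_eq]
  simp [Fin.sum_univ_two, Real.dist_eq, sq_abs]

lemma flE_bound (x z y : EuclideanSpace ℝ (Fin 2)) :
    |flE x z y| ≤ dist x z * dist z y := by
  set u0 := z 0 - x 0
  set u1 := z 1 - x 1
  set v0 := y 0 - z 0
  set v1 := y 1 - z 1
  have h0 : |flE x z y| = (1 / 2) * |u0 * v1 - u1 * v0| := by
    have : flE x z y = -(1 / 2) * (u0 * v1 - u1 * v0) := by
      simp only [flE, phiE, u0, u1, v0, v1]; ring
    rw [this, abs_mul]
    norm_num
  have hA : dist x z = Real.sqrt (u0 ^ 2 + u1 ^ 2) := by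
    rw [aux_dist]; congr 1; ring
  have hB : dist z y = Real.sqrt (v0 ^ 2 + v1 ^ 2) := by
    rw [aux_dist]; congr 1; ring
  have key : |u0 * v1 - u1 * v0| ≤ Real.sqrt (u0 ^ 2 + u1 ^ 2) * Real.sqrt (v0 ^ 2 + v1 ^ 2) := by
    rw [← Real.sqrt_sq_eq_abs, ← Real.sqrt_mul (by positivity)]
    apply Real.sqrt_le_sqrt
    nlinarith [sq_nonneg (u0 * v0 + u1 * v1)]
  rw [h0, hA, hB]
  nlinarith [abs_nonneg (u0 * v1 - u1 * v0)]

lemma t_exp_bound {c t : ℝ} (hc : 0 < c) (ht : 0 ≤ t) :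
    t * Real.exp (-c * t) ≤ (2 / c) * Real.exp (-(c / 2) * t) := by
  have h1 : (c / 2) * t ≤ Real.exp ((c / 2) * t) :=
    le_trans (by linarith [Real.add_one_le_exp ((c / 2) * t)]) le_rfl
  have h2 : t ≤ (2 / c) * Real.exp ((c / 2) * t) := by
    calc t = (2 / c) * ((c / 2) * t) := by field_simp
    _ ≤ (2 / c) * Real.exp ((c / 2) * t) := by
        apply mul_le_mul_of_nonneg_left h1 (by positivity)
  calc t * Real.exp (-c * t) ≤ ((2 / c) * Real.exp ((c / 2) * t)) * Real.exp (-c * t) := by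
        apply mul_le_mul_of_nonneg_right h2 (Real.exp_pos _).le
    _ = (2 / c) * Real.exp (-(c / 2) * t) := by
        rw [mul_assoc, ← Real.exp_add]; ring_nf

lemma chain_bound {c₁ c₂ δ dxz dzy dxy : ℝ} (hc₁ : 0 < c₁) (hc₂ : 0 < c₂) (hδ : 0 ≤ δ)
    (h1 : 0 ≤ dxz) (h2 : 0 ≤ dzy) (htri : dxy ≤ dxz + dzy) :
    (2 * (δ * (dxz * dzy))) * (c₁ * Real.exp (-c₂ * dxz)) * (c₁ * Real.exp (-c₂ * dzy)) ≤
      (2 * c₁ ^ 2 * (2 / c₂) ^ 2 * δ * Real.exp (-(c₂ / 4) * dxy)) *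
        Real.exp (-(c₂ / 4) * dxz) := by
  have e1 := t_exp_bound hc₂ h1
  have e2 := t_exp_bound hc₂ h2
  have e3 : Real.exp (-(c₂ / 2) * dxz) * Real.exp (-(c₂ / 2) * dzy) ≤
      Real.exp (-(c₂ / 4) * dxy) * Real.exp (-(c₂ / 4) * dxz) := by
    rw [← Real.exp_add, ← Real.exp_add]
    apply Real.exp_le_exp.mpr
    nlinarith
  calc (2 * (δ * (dxz * dzy))) * (c₁ * Real.exp (-c₂ * dxz)) * (c₁ * Real.exp (-c₂ * dzy))
      = (2 * c₁ ^ 2 * δ) *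
        ((dxz * Real.exp (-c₂ * dxz)) * (dzy * Real.exp (-c₂ * dzy))) := by ring
    _ ≤ (2 * c₁ ^ 2 * δ) *
        (((2 / c₂) * Real.exp (-(c₂ / 2) * dxz)) * ((2 / c₂) * Real.exp (-(c₂ / 2) * dzy))) := by
        apply mul_le_mul_of_nonneg_left _ (by positivity)
        exact mul_le_mul e1 e2 (by positivity) (by positivity)
    _ = (2 * c₁ ^ 2 * (2 / c₂) ^ 2 * δ) *
        (Real.exp (-(c₂ / 2) * dxz) * Real.exp (-(c₂ / 2) * dzy)) := by ring
    _ ≤ (2 * c₁ ^ 2 * (2 / c₂) ^ 2 * δ) *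
        (Real.exp (-(c₂ / 4) * dxy) * Real.exp (-(c₂ / 4) * dxz)) := by
        apply mul_le_mul_of_nonneg_left e3 (by positivity)
    _ = _ := by ring

lemma tsum_cs {ι : Type*} (a t : ι → ℝ) (ha : ∀ i, 0 ≤ a i) (ht : ∀ i, 0 ≤ t i)
    (hsa : Summable a) (hsat : Summable (fun i => a i * t i ^ 2)) :
    (∑' i, a i * t i) ^ 2 ≤ (∑' i, a i) * (∑' i, a i * t i ^ 2) := by
  have hs : Summable (fun i => a i * t i) := by
    apply Summable.of_nonneg_of_le (fun i => mul_nonneg (ha i) (ht i))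
      (fun i => ?_) ((hsa.add hsat).div_const 2)
    have := mul_nonneg (ha i) (sq_nonneg (t i - 1))
    show a i * t i ≤ (a i + a i * t i ^ 2) / 2
    nlinarith
  set A := ∑' i, a i with hAdef
  set B := ∑' i, a i * t i ^ 2 with hBdef
  have hA0 : 0 ≤ A := tsum_nonneg ha
  have hB0 : 0 ≤ B := tsum_nonneg fun i => mul_nonneg (ha i) (sq_nonneg _)
  have key : ∀ s : Finset ι, ∑ i ∈ s, a i * t i ≤ Real.sqrt (A * B) := by
    intro s
    have h1 : (∑ i ∈ s, a i * t i) ^ 2 ≤ (∑ i ∈ s, a i) * (∑ i ∈ s, a i * t i ^ 2) := by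
      calc (∑ i ∈ s, a i * t i) ^ 2
          = (∑ i ∈ s, Real.sqrt (a i) * (Real.sqrt (a i) * t i)) ^ 2 := by
            congr 1
            refine Finset.sum_congr rfl fun i _ => ?_
            rw [← mul_assoc, Real.mul_self_sqrt (ha i)]
      _ ≤ (∑ i ∈ s, Real.sqrt (a i) ^ 2) * ∑ i ∈ s, (Real.sqrt (a i) * t i) ^ 2 :=
            Finset.sum_mul_sq_le_sq_mul_sq s _ _
      _ = (∑ i ∈ s, a i) * ∑ i ∈ s, a i * t i ^ 2 := by
            congr 1
            · exact Finset.sum_congr rfl fun i _ => Real.sq_sqrt (ha i)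
            · refine Finset.sum_congr rfl fun i _ => ?_
              rw [mul_pow, Real.sq_sqrt (ha i)]
    have h2 : ∑ i ∈ s, a i ≤ A := Summable.sum_le_tsum s (fun i _ => ha i) hsa
    have h3 : ∑ i ∈ s, a i * t i ^ 2 ≤ B :=
      Summable.sum_le_tsum s (fun i _ => mul_nonneg (ha i) (sq_nonneg _)) hsat
    have h4 : (∑ i ∈ s, a i * t i) ^ 2 ≤ A * B :=
      le_trans h1 (mul_le_mul h2 h3 (Finset.sum_nonneg fun i _ =>
        mul_nonneg (ha i) (sq_nonneg _)) hA0)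
    calc ∑ i ∈ s, a i * t i = Real.sqrt ((∑ i ∈ s, a i * t i) ^ 2) :=
          (Real.sqrt_sq (Finset.sum_nonneg fun i _ => mul_nonneg (ha i) (ht i))).symm
    _ ≤ Real.sqrt (A * B) := Real.sqrt_le_sqrt h4
  have h5 : ∑' i, a i * t i ≤ Real.sqrt (A * B) := Summable.tsum_le_of_sum_le hs key
  calc (∑' i, a i * t i) ^ 2 ≤ Real.sqrt (A * B) ^ 2 :=
        pow_le_pow_left₀ (tsum_nonneg fun i => mul_nonneg (ha i) (ht i)) h5 2
  _ = A * B := Real.sq_sqrt (mul_nonneg hA0 hB0)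

open scoped ENNReal in
lemma rpow_toReal_two (r : ℝ) : r ^ ((2 : ℝ≥0∞)).toReal = r ^ 2 := by
  rw [ENNReal.toReal_ofNat, Real.rpow_two]


set_option maxHeartbeats 2000000 in
open scoped ENNReal in
lemma schur_bound {Λ : Type} [Countable Λ] (KK : Λ → Λ → ℂ) (k : Λ → Λ → ℝ) (S : ℝ)
    (hkb : ∀ x y, ‖KK x y‖ ≤ k x y)
    (hknn : ∀ x y, 0 ≤ k x y)
    (hsym : ∀ x y, k x y = k y x)
    (hS : 0 ≤ S)
    (hrow : ∀ x, Summable (k x))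
    (hrowsum : ∀ x, ∑' y, k x y ≤ S)
    (T : lp (fun _ : Λ => ℂ) 2 →L[ℂ] lp (fun _ : Λ => ℂ) 2)
    (hT : ∀ (ψ : lp (fun _ : Λ => ℂ) 2) (x : Λ), T ψ x = ∑' y, KK x y * ψ y) :
    ‖T‖ ≤ S := by
  have htp : (0 : ℝ) < (2 : ℝ≥0∞).toReal := by
    rw [ENNReal.toReal_ofNat]; norm_num
  refine T.opNorm_le_bound hS ?_
  intro ψ
  have hψle : ∀ y, ‖ψ y‖ ≤ ‖ψ‖ := fun y =>
    lp.norm_apply_le_norm (by norm_num) ψ y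
  have hψsq : Summable (fun y => ‖ψ y‖ ^ 2) := by
    simpa [rpow_toReal_two] using (lp.memℓp ψ).summable htp
  have hpsi2 : ‖ψ‖ ^ 2 = ∑' y, ‖ψ y‖ ^ 2 := by
    simpa [rpow_toReal_two] using lp.norm_rpow_eq_tsum htp ψ
  have h1 : ∀ x, ‖T ψ x‖ ≤ ∑' y, k x y * ‖ψ y‖ := by
    intro x
    rw [hT ψ x]
    have hmaj : Summable (fun y => k x y * ‖ψ y‖) :=
      Summable.of_nonneg_of_le (fun y => mul_nonneg (hknn x y) (norm_nonneg _))
        (fun y => mul_le_mul_of_nonneg_left (hψle y) (hknn x y))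
        ((hrow x).mul_right ‖ψ‖)
    have hb : ∀ y, ‖KK x y * ψ y‖ ≤ k x y * ‖ψ y‖ := fun y => by
      rw [norm_mul]
      exact mul_le_mul_of_nonneg_right (hkb x y) (norm_nonneg _)
    have hnorm : Summable (fun y => ‖KK x y * ψ y‖) :=
      Summable.of_nonneg_of_le (fun y => norm_nonneg _) hb hmaj
    exact le_trans (norm_tsum_le_tsum_norm hnorm) (Summable.tsum_le_tsum hb hnorm hmaj)
  have rows : ∀ x, Summable (fun y => k x y * ‖ψ y‖ ^ 2) := by
    intro x
    refine Summable.of_nonneg_of_le (fun y => mul_nonneg (hknn x y) (sq_nonneg _))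
      (fun y => ?_) ((hrow x).mul_right (‖ψ‖ ^ 2))
    exact mul_le_mul_of_nonneg_left (pow_le_pow_left₀ (norm_nonneg _) (hψle y) 2) (hknn x y)
  have cols : ∀ y, Summable (fun x => k x y) := by
    intro y
    exact (hrow y).congr (fun x => (hsym y x))
  have cols2 : ∀ y, Summable (fun x => k x y * ‖ψ y‖ ^ 2) :=
    fun y => (cols y).mul_right _
  have colsum : ∀ y, ∑' x, k x y ≤ S := by
    intro y
    have : ∑' x, k x y = ∑' x, k y x := tsum_congr fun x => hsym x y
    rw [this]; exact hrowsum y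
  have hmargy : Summable (fun y => ∑' x, k x y * ‖ψ y‖ ^ 2) := by
    refine Summable.of_nonneg_of_le
      (fun y => tsum_nonneg fun x => mul_nonneg (hknn x y) (sq_nonneg _))
      (fun y => ?_) (hψsq.mul_left S)
    rw [tsum_mul_right]
    exact mul_le_mul_of_nonneg_right (colsum y) (sq_nonneg _)
  have hP : Summable (fun p : Λ × Λ => k p.2 p.1 * ‖ψ p.1‖ ^ 2) := by
    refine (summable_prod_of_nonneg ?_).mpr ⟨fun y => cols2 y, ?_⟩
    · exact fun p => mul_nonneg (hknn _ _) (sq_nonneg _)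
    · exact hmargy
  have hUF : Summable (fun p : Λ × Λ => k p.1 p.2 * ‖ψ p.2‖ ^ 2) := by
    have := ((Equiv.prodComm Λ Λ).summable_iff
      (f := fun p : Λ × Λ => k p.2 p.1 * ‖ψ p.1‖ ^ 2)).mpr hP
    simpa [Function.comp_def] using this
  have hmargx : Summable (fun x => ∑' y, k x y * ‖ψ y‖ ^ 2) :=
    (hUF.hasSum.prod_fiberwise (fun x => (rows x).hasSum)).summable
  have hswap : ∑' x, ∑' y, k x y * ‖ψ y‖ ^ 2 = ∑' y, ∑' x, k x y * ‖ψ y‖ ^ 2 :=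
    (Summable.tsum_comm' (f := fun x y => k x y * ‖ψ y‖ ^ 2) hUF rows cols2).symm
  have q1 : ∀ x, (∑' y, k x y * ‖ψ y‖) ^ 2 ≤ S * ∑' y, k x y * ‖ψ y‖ ^ 2 := by
    intro x
    refine le_trans (tsum_cs (k x) (fun y => ‖ψ y‖) (hknn x) (fun y => norm_nonneg _)
      (hrow x) (rows x)) ?_
    exact mul_le_mul_of_nonneg_right (hrowsum x)
      (tsum_nonneg fun y => mul_nonneg (hknn x y) (sq_nonneg _))
  have hTs : Summable (fun x => ‖T ψ x‖ ^ 2) := by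
    simpa [rpow_toReal_two] using (lp.memℓp (T ψ)).summable htp
  have hq : Summable (fun x => (∑' y, k x y * ‖ψ y‖) ^ 2) :=
    Summable.of_nonneg_of_le (fun x => sq_nonneg _) q1 (hmargx.mul_left S)
  have big : ∑' x, ‖T ψ x‖ ^ 2 ≤ (S * ‖ψ‖) ^ 2 := by
    calc ∑' x, ‖T ψ x‖ ^ 2 ≤ ∑' x, (∑' y, k x y * ‖ψ y‖) ^ 2 :=
          Summable.tsum_le_tsum (fun x => pow_le_pow_left₀ (norm_nonneg _) (h1 x) 2) hTs hq
    _ ≤ ∑' x, S * ∑' y, k x y * ‖ψ y‖ ^ 2 := Summable.tsum_le_tsum q1 hq (hmargx.mul_left S)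
    _ = S * ∑' x, ∑' y, k x y * ‖ψ y‖ ^ 2 := tsum_mul_left
    _ = S * ∑' y, ∑' x, k x y * ‖ψ y‖ ^ 2 := by rw [hswap]
    _ ≤ S * ∑' y, S * ‖ψ y‖ ^ 2 := by
        refine mul_le_mul_of_nonneg_left
          (Summable.tsum_le_tsum (fun y => ?_) hmargy (hψsq.mul_left S)) hS
        rw [tsum_mul_right]
        exact mul_le_mul_of_nonneg_right (colsum y) (sq_nonneg _)
    _ = S * (S * ‖ψ‖ ^ 2) := by rw [tsum_mul_left, ← hpsi2]
    _ = (S * ‖ψ‖) ^ 2 := by ring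
  refine lp.norm_le_of_tsum_le htp (mul_nonneg hS (norm_nonneg _)) ?_
  simpa [rpow_toReal_two] using big

/-- Bound on the kernel of `T̃_b(ξ)` and on its operator norm: if the kernels `H_{b₀}` and
`R_{b₀}(·,·;ξ)` (uniformly for `ξ ∈ K`) are exponentially almost diagonal, then the kernel
`T̃_b(x,y;ξ) = e^{iδbφ(x,y)} Σ_z (e^{iδb fl(x,z,y)} − 1) H_{b₀}(x,z) R_{b₀}(z,y;ξ)`
obeys `|T̃_b(x,y;ξ)| ≤ c_K |δb| e^{−c₂'|x−y|}` and `‖T̃_b(ξ)‖ ≤ C_K |δb|`. -/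
theorem tilde_T_bound (Λ : Type) [Countable Λ] (pos : Λ → EuclideanSpace ℝ (Fin 2))
    (hgeo : ∀ c : ℝ, 0 < c → ∃ S : ℝ, ∀ x : Λ,
      Summable (fun y : Λ => Real.exp (-c * dist (pos x) (pos y))) ∧
      ∑' y : Λ, Real.exp (-c * dist (pos x) (pos y)) ≤ S)
    (b₀ : ℝ) (K : Set ℂ) (Hk : Λ → Λ → ℂ) (Rk : ℂ → Λ → Λ → ℂ)
    (c₁ c₂ : ℝ) (hc₁ : 0 < c₁) (hc₂ : 0 < c₂)
    (hH : ∀ x y : Λ, ‖Hk x y‖ ≤ c₁ * Real.exp (-c₂ * dist (pos x) (pos y)))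
    (hR : ∀ ξ ∈ K, ∀ x y : Λ,
      ‖Rk ξ x y‖ ≤ c₁ * Real.exp (-c₂ * dist (pos x) (pos y))) :
    ∃ cK c₂' CK : ℝ, 0 < cK ∧ 0 < c₂' ∧ 0 < CK ∧
      ∀ (b : ℝ), ∀ ξ ∈ K,
        (∀ x y : Λ,
          ‖Complex.exp (Complex.I * (b - b₀) * phiE (pos x) (pos y)) *
              ∑' z : Λ, (Complex.exp (Complex.I * (b - b₀) * flE (pos x) (pos z) (pos y)) - 1) *
                Hk x z * Rk ξ z y‖ ≤
            cK * |b - b₀| * Real.exp (-c₂' * dist (pos x) (pos y))) ∧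
        (∀ T : lp (fun _ : Λ => ℂ) 2 →L[ℂ] lp (fun _ : Λ => ℂ) 2,
          (∀ (ψ : lp (fun _ : Λ => ℂ) 2) (x : Λ),
            T ψ x = ∑' y : Λ,
              (Complex.exp (Complex.I * (b - b₀) * phiE (pos x) (pos y)) *
                ∑' z : Λ, (Complex.exp (Complex.I * (b - b₀) * flE (pos x) (pos z) (pos y)) - 1) *
                  Hk x z * Rk ξ z y) * ψ y) →
          ‖T‖ ≤ CK * |b - b₀|) := by
  obtain ⟨S₀, hS₀⟩ := hgeo (c₂ / 4) (by positivity)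
  set S : ℝ := max S₀ 1 with hSdef
  have hS1 : (1 : ℝ) ≤ S := le_max_right _ _
  have hSpos : 0 < S := lt_of_lt_of_le one_pos hS1
  have hrow : ∀ x : Λ, Summable (fun y : Λ => Real.exp (-(c₂ / 4) * dist (pos x) (pos y))) :=
    fun x => (hS₀ x).1
  have hrowsum : ∀ x : Λ,
      ∑' y : Λ, Real.exp (-(c₂ / 4) * dist (pos x) (pos y)) ≤ S :=
    fun x => le_trans (hS₀ x).2 (le_max_left _ _)
  set A : ℝ := 2 * c₁ ^ 2 * (2 / c₂) ^ 2 with hAdef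
  have hApos : 0 < A := by positivity
  refine ⟨A * S, c₂ / 4, A * S * S, by positivity, by positivity, by positivity, ?_⟩
  intro b ξ hξ
  set δ : ℝ := |b - b₀| with hδdef
  have hδ0 : 0 ≤ δ := abs_nonneg _
  -- the kernel bound
  have kb : ∀ x y : Λ,
      ‖Complex.exp (Complex.I * (b - b₀) * phiE (pos x) (pos y)) *
          ∑' z : Λ, (Complex.exp (Complex.I * (b - b₀) * flE (pos x) (pos z) (pos y)) - 1) *
            Hk x z * Rk ξ z y‖ ≤
        A * S * δ * Real.exp (-(c₂ / 4) * dist (pos x) (pos y)) := by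
    intro x y
    have hre : ∀ r : ℝ, (Complex.I * (b - b₀) * (r : ℂ)).re = 0 := by
      intro r; simp [Complex.mul_re]
    have habs : ∀ r : ℝ, ‖Complex.I * (b - b₀) * (r : ℂ)‖ = δ * |r| := by
      intro r
      have e : Complex.I * ((b : ℂ) - (b₀ : ℂ)) * (r : ℂ)
          = Complex.I * (((b - b₀ : ℝ)) : ℂ) * (r : ℂ) := by push_cast; ring
      rw [hδdef, e, norm_mul, norm_mul, Complex.norm_I, Complex.norm_real, Complex.norm_real,
        Real.norm_eq_abs, Real.norm_eq_abs, one_mul]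
    have hpoint : ∀ z : Λ,
        ‖(Complex.exp (Complex.I * (b - b₀) * flE (pos x) (pos z) (pos y)) - 1) *
            Hk x z * Rk ξ z y‖ ≤
          (A * δ * Real.exp (-(c₂ / 4) * dist (pos x) (pos y))) *
            Real.exp (-(c₂ / 4) * dist (pos x) (pos z)) := by
      intro z
      rw [norm_mul, norm_mul]
      have e1 : ‖
          Complex.exp (Complex.I * (b - b₀) * flE (pos x) (pos z) (pos y)) - 1‖ ≤
          2 * (δ * (dist (pos x) (pos z) * dist (pos z) (pos y))) := by
        refine le_trans (aux_exp_sub_one _ (hre _)) ?_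
        rw [habs]
        have := flE_bound (pos x) (pos z) (pos y)
        nlinarith [abs_nonneg (flE (pos x) (pos z) (pos y)), dist_nonneg (x := pos x) (y := pos z),
          dist_nonneg (x := pos z) (y := pos y)]
      calc ‖Complex.exp (Complex.I * (b - b₀) * flE (pos x) (pos z) (pos y)) - 1‖ *
            ‖Hk x z‖ * ‖Rk ξ z y‖
          ≤ (2 * (δ * (dist (pos x) (pos z) * dist (pos z) (pos y)))) *
            (c₁ * Real.exp (-c₂ * dist (pos x) (pos z))) *
            (c₁ * Real.exp (-c₂ * dist (pos z) (pos y))) := by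
            have g1 := hH x z
            have g2 := hR ξ hξ z y
            have n1 : (0:ℝ) ≤ ‖Hk x z‖ := norm_nonneg _
            have n2 : (0:ℝ) ≤ ‖Rk ξ z y‖ := norm_nonneg _
            have n3 : (0:ℝ) ≤ 2 * (δ * (dist (pos x) (pos z) * dist (pos z) (pos y))) := by
              have := dist_nonneg (x := pos x) (y := pos z)
              have := dist_nonneg (x := pos z) (y := pos y)
              positivity
            apply mul_le_mul _ g2 n2 (by positivity)
            exact mul_le_mul e1 g1 n1 n3
        _ ≤ (A * δ * Real.exp (-(c₂ / 4) * dist (pos x) (pos y))) *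
              Real.exp (-(c₂ / 4) * dist (pos x) (pos z)) := by
            have := chain_bound (δ := δ) hc₁ hc₂ hδ0
              (dist_nonneg (x := pos x) (y := pos z)) (dist_nonneg (x := pos z) (y := pos y))
              (dist_triangle (pos x) (pos z) (pos y))
            simpa [hAdef, mul_assoc, mul_comm, mul_left_comm] using this
    have hmaj : Summable (fun z : Λ =>
        (A * δ * Real.exp (-(c₂ / 4) * dist (pos x) (pos y))) *
          Real.exp (-(c₂ / 4) * dist (pos x) (pos z))) := (hrow x).mul_left _
    have hnorm : Summable (fun z : Λ =>
        ‖(Complex.exp (Complex.I * (b - b₀) * flE (pos x) (pos z) (pos y)) - 1) *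
          Hk x z * Rk ξ z y‖) := by
      refine Summable.of_nonneg_of_le (fun z => norm_nonneg _) (fun z => ?_) hmaj
      exact hpoint z
    rw [norm_mul, aux_abs_exp _ (hre _), one_mul]
    calc ‖∑' z : Λ,
          (Complex.exp (Complex.I * (b - b₀) * flE (pos x) (pos z) (pos y)) - 1) *
            Hk x z * Rk ξ z y‖
        = ‖∑' z : Λ,
          (Complex.exp (Complex.I * (b - b₀) * flE (pos x) (pos z) (pos y)) - 1) *
            Hk x z * Rk ξ z y‖ := rfl
      _ ≤ ∑' z : Λ, ‖(Complex.exp (Complex.I * (b - b₀) * flE (pos x) (pos z) (pos y)) - 1) *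
            Hk x z * Rk ξ z y‖ := norm_tsum_le_tsum_norm hnorm
      _ ≤ ∑' z : Λ, (A * δ * Real.exp (-(c₂ / 4) * dist (pos x) (pos y))) *
            Real.exp (-(c₂ / 4) * dist (pos x) (pos z)) :=
          Summable.tsum_le_tsum (fun z => hpoint z) hnorm hmaj
      _ = (A * δ * Real.exp (-(c₂ / 4) * dist (pos x) (pos y))) *
            ∑' z : Λ, Real.exp (-(c₂ / 4) * dist (pos x) (pos z)) := tsum_mul_left
      _ ≤ (A * δ * Real.exp (-(c₂ / 4) * dist (pos x) (pos y))) * S := by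
          apply mul_le_mul_of_nonneg_left (hrowsum x) (by positivity)
      _ = A * S * δ * Real.exp (-(c₂ / 4) * dist (pos x) (pos y)) := by ring
  refine ⟨fun x y => kb x y, ?_⟩
  -- the operator norm bound
  intro T hT
  have hM0 : (0:ℝ) ≤ A * S * δ := mul_nonneg (mul_nonneg hApos.le hSpos.le) hδ0
  have hknn : ∀ x y : Λ,
      (0:ℝ) ≤ A * S * δ * Real.exp (-(c₂ / 4) * dist (pos x) (pos y)) :=
    fun x y => mul_nonneg hM0 (Real.exp_pos _).le
  have hsymk : ∀ x y : Λ,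
      A * S * δ * Real.exp (-(c₂ / 4) * dist (pos x) (pos y)) =
        A * S * δ * Real.exp (-(c₂ / 4) * dist (pos y) (pos x)) :=
    fun x y => by rw [dist_comm]
  have hrowk : ∀ x : Λ,
      Summable (fun y : Λ => A * S * δ * Real.exp (-(c₂ / 4) * dist (pos x) (pos y))) :=
    fun x => (hrow x).mul_left _
  have hrowsumk : ∀ x : Λ,
      ∑' y : Λ, A * S * δ * Real.exp (-(c₂ / 4) * dist (pos x) (pos y)) ≤ (A * S * δ) * S := by
    intro x
    rw [tsum_mul_left]
    exact mul_le_mul_of_nonneg_left (hrowsum x) hM0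
  have hnorm : ‖T‖ ≤ (A * S * δ) * S :=
    schur_bound _ (fun x y => A * S * δ * Real.exp (-(c₂ / 4) * dist (pos x) (pos y)))
      ((A * S * δ) * S) (fun x y => kb x y) hknn hsymk (mul_nonneg hM0 hSpos.le)
      hrowk hrowsumk T hT
  calc ‖T‖ ≤ (A * S * δ) * S := hnorm
  _ = A * S * S * |b - b₀| := by rw [hδdef]; ring
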